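/- Assume φ is C² and F₀ ⊆ int(Ω), where F₀ denotes the closure of the convex hull of the support of P. Then for every h ∈ (0,1) and K > 0, there exists r⁺ < ∞ such that sup{ r_s(c) : c ∈ F₀ ∩ B̄(0,K), s ≤ h } ≤ r⁺. As a consequence, if c ∈ Ω^k is a codebook having a codepoint c_{j₀} ∈ F₀ with ‖c_{j₀}‖ ≤ K, and s ≤ h, then r_s(c) ≤ r⁺. -/

import Mathlib

open MeasureTheory ENNReal Filter Topology
open scoped RealInnerProductSpace BigOperators

noncomputable section

variable {E : Type*} [NormedAddCommGroup E] [InnerProductSpace ℝ E] [CompleteSpace E]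
  [MeasurableSpace E] [BorelSpace E]

/-- Bregman divergence `d_φ(x,y) = φ x − φ y − ⟪∇φ(y), x − y⟫`. -/
def breg (φ : E → ℝ) (x y : E) : ℝ :=
  φ x - φ y - ⟪gradient φ y, x - y⟫

/-- Bregman divergence from a point to a codebook: `min_j d_φ(x, c_j)`. -/
def bregCode {k : ℕ} (φ : E → ℝ) (x : E) (c : Fin k → E) : ℝ :=
  ⨅ j, breg φ x (c j)

/-- Open Bregman ball of a codebook. -/
def bBall {k : ℕ} (φ : E → ℝ) (c : Fin k → E) (r : ℝ) : Set E :=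
  {x | bregCode φ x c < r ^ 2}

/-- Closed Bregman ball of a codebook. -/
def bBallc {k : ℕ} (φ : E → ℝ) (c : Fin k → E) (r : ℝ) : Set E :=
  {x | bregCode φ x c ≤ r ^ 2}

/-- Bregman sphere of a codebook. -/
def bSphere {k : ℕ} (φ : E → ℝ) (c : Fin k → E) (r : ℝ) : Set E :=
  {x | bregCode φ x c = r ^ 2}

/-- `𝒫_h`: normalized sub-measures of `P` of total mass `h`. -/
def subProb (P : Measure E) (h : ℝ) : Set (Measure E) :=
  {Pt | ∃ Q : Measure E, Q ≤ P ∧ Q Set.univ = ENNReal.ofReal h ∧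
        Pt = (ENNReal.ofReal h)⁻¹ • Q}

/-- Distortion `R(P̃, c) = ∫ d_φ(u, c) dP̃(u)`. -/
def distor {k : ℕ} (φ : E → ℝ) (Pt : Measure E) (c : Fin k → E) : ℝ :=
  ∫ x, bregCode φ x c ∂Pt

/-- The trimming radius `r_h(c)`: smallest `r ≥ 0` with
`P(B_φ(c,r)) ≤ h ≤ P(B̄_φ(c,r))`. -/
def trimRadius {k : ℕ} (P : Measure E) (φ : E → ℝ) (h : ℝ) (c : Fin k → E) : ℝ :=
  sInf {r : ℝ | 0 ≤ r ∧ P (bBall φ c r) ≤ ENNReal.ofReal h ∧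
        ENNReal.ofReal h ≤ P (bBallc φ c r)}

/-- `𝒫_h(c)`: elements of `𝒫_h` coinciding with `P/h` on the open ball
`B_φ(c, r_h(c))` and supported in the closed ball `B̄_φ(c, r_h(c))`. -/
def subProbC {k : ℕ} (P : Measure E) (φ : E → ℝ) (h : ℝ) (c : Fin k → E) :
    Set (Measure E) :=
  {Pt | Pt ∈ subProb P h ∧
    Pt.restrict (bBall φ c (trimRadius P φ h c)) =
      ((ENNReal.ofReal h)⁻¹ • P).restrict (bBall φ c (trimRadius P φ h c)) ∧
    Pt (bBallc φ c (trimRadius P φ h c))ᶜ = 0}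

/-- The `h`-trimmed distortion `R_h(c) = h·R(P̃_c, c)` for any `P̃_c ∈ 𝒫_h(c)`
(the value does not depend on the choice of `P̃_c`). -/
def trimDistor {k : ℕ} (P : Measure E) (φ : E → ℝ) (h : ℝ) (c : Fin k → E) : ℝ :=
  sInf ((fun Pt => h * distor φ Pt c) '' subProbC P φ h c)

/-- Support of a measure. -/
def msupport (P : Measure E) : Set E := {x | ∀ U ∈ nhds x, P U ≠ 0}

/-- `F₀`: closure of the convex hull of the support of `P`. -/
def F0 (P : Measure E) : Set E := closure (convexHull ℝ (msupport P))

/-- Optimal `j`-point `h`-trimmed distortion `R*_{j,h}`, over codebooks in `Ω`. -/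
def optTrim (P : Measure E) (φ : E → ℝ) (Ω : Set E) (h : ℝ) (j : ℕ) : ℝ :=
  sInf {r : ℝ | ∃ c : Fin j → E, (∀ i, c i ∈ Ω) ∧ r = trimDistor P φ h c}

/-- Distance between codebooks up to relabelling. -/
def Dcode {k : ℕ} (c c' : Fin k → E) : ℝ :=
  ⨅ σ : Equiv.Perm (Fin k), ⨆ i, ‖c i - c' (σ i)‖

/-- Empirical measure of a finite sample. -/
def empMeas {n : ℕ} (X : Fin n → E) : Measure E :=
  (n : ℝ≥0∞)⁻¹ • ∑ i, Measure.dirac (X i)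

/-- Bregman–Voronoi cell `V_i(c)`. -/
def vorCell {k : ℕ} (φ : E → ℝ) (c : Fin k → E) (i : Fin k) : Set E :=
  {x | ∀ j, j ≠ i → breg φ x (c i) ≤ breg φ x (c j)}

/-- Discernability factor `B_h` (for `k`-point quantization over `Ω`). -/
def discern (P : Measure E) (φ : E → ℝ) (Ω : Set E) (h : ℝ) (k : ℕ) : ℝ :=
  sSup {b : ℝ | 0 ≤ b ∧ b ≤ min h (1 - h) ∧
    ∀ j, 2 ≤ j → j ≤ k →
      0 < optTrim P φ Ω ((h - b) / (1 - b)) (j - 1) - optTrim P φ Ω (h / (1 - b)) j}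


theorem stmt_13 {d k : ℕ}
    (Ω : Set (EuclideanSpace ℝ (Fin d))) (hΩ : Convex ℝ Ω)
    (φ : EuclideanSpace ℝ (Fin d) → ℝ) (hsc : StrictConvexOn ℝ Ω φ) (hC2 : ContDiffOn ℝ 2 φ Ω)
    (P : Measure (EuclideanSpace ℝ (Fin d))) [IsProbabilityMeasure P] (hsupp : P Ωᶜ = 0)
    (hF0 : F0 P ⊆ interior Ω)
    (h : ℝ) (hh : 0 < h) (hh1 : h < 1) (K : ℝ) (hK : 0 < K) :
    ∃ rp : ℝ,
      (∀ c0 ∈ F0 P ∩ Metric.closedBall (0 : EuclideanSpace ℝ (Fin d)) K, ∀ s : ℝ, 0 < s → s ≤ h →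
        trimRadius P φ s (fun _ : Fin 1 => c0) ≤ rp) ∧
      (∀ c : Fin k → EuclideanSpace ℝ (Fin d), ∀ j0 : Fin k, c j0 ∈ F0 P → ‖c j0‖ ≤ K →
        ∀ s : ℝ, 0 < s → s ≤ h → trimRadius P φ s c ≤ rp) := by
  set C : Set (EuclideanSpace ℝ (Fin d)) :=
    F0 P ∩ Metric.closedBall (0 : EuclideanSpace ℝ (Fin d)) K with hCdef
  rcases C.eq_empty_or_nonempty with hCe | hCne
  · refine ⟨0, ?_, ?_⟩
    · intro c0 hc0 s hs hsh
      rw [hCe] at hc0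
      exact absurd hc0 (Set.notMem_empty c0)
    · intro c j0 h1 h2 s hs hsh
      have hm : c j0 ∈ C := ⟨h1, by simpa [Metric.mem_closedBall, dist_zero_right] using h2⟩
      exact absurd hm (by rw [hCe]; simp)
  · have hCcomp : IsCompact C := (isCompact_closedBall _ _).inter_left isClosed_closure
    have hCsubInt : C ⊆ interior Ω := fun y hy => hF0 hy.1
    have hCsubΩ : C ⊆ Ω := fun y hy => interior_subset (hCsubInt hy)
    have hφcont : ContinuousOn φ C := (hC2.continuousOn).mono hCsubΩ
    have hgcont : ContinuousOn (gradient φ) (interior Ω) := by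
      have hfd : ContinuousOn (fderiv ℝ φ) (interior Ω) :=
        (hC2.mono interior_subset).continuousOn_fderiv_of_isOpen isOpen_interior one_le_two
      exact ((InnerProductSpace.toDual ℝ _).symm.continuous.comp_continuousOn hfd)
    have hgcontC : ContinuousOn (gradient φ) C := hgcont.mono hCsubInt
    set A : ℝ := sSup ((fun y => -φ y) '' C) with hAdef
    set B : ℝ := sSup ((fun y => ‖gradient φ y‖) '' C) with hBdef
    have hAcomp : IsCompact ((fun y => -φ y) '' C) :=
      hCcomp.image_of_continuousOn hφcont.neg
    have hBcomp : IsCompact ((fun y => ‖gradient φ y‖) '' C) :=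
      hCcomp.image_of_continuousOn hgcontC.norm
    have hA : ∀ y ∈ C, -φ y ≤ A := fun y hy =>
      le_csSup hAcomp.bddAbove (Set.mem_image_of_mem _ hy)
    have hB : ∀ y ∈ C, ‖gradient φ y‖ ≤ B := fun y hy =>
      le_csSup hBcomp.bddAbove (Set.mem_image_of_mem _ hy)
    have hB0 : 0 ≤ B := le_trans (norm_nonneg _) (hB _ hCne.choose_spec)
    set f : EuclideanSpace ℝ (Fin d) → ℝ := fun x => φ x + A + B * (‖x‖ + K) with hfdef
    have hbound : ∀ (x : EuclideanSpace ℝ (Fin d)), ∀ y ∈ C, breg φ x y ≤ f x := by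
      intro x y hy
      have h1 : -φ y ≤ A := hA y hy
      have hyK : ‖y‖ ≤ K := by
        simpa [Metric.mem_closedBall, dist_zero_right] using hy.2
      have h2 : -⟪gradient φ y, x - y⟫ ≤ B * (‖x‖ + K) := by
        refine le_trans (le_trans (neg_le_abs _) (abs_real_inner_le_norm _ _)) ?_
        refine mul_le_mul (hB y hy) (le_trans (norm_sub_le _ _) ?_) (norm_nonneg _) hB0
        linarith
      simp only [breg, hfdef]
      linarith
    set S : ℕ → Set (EuclideanSpace ℝ (Fin d)) := fun n => {x | f x < (n : ℝ)} with hSdef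
    have hmono : Monotone S := by
      intro a b hab x hx
      simp only [hSdef, Set.mem_setOf_eq] at hx ⊢
      exact hx.trans_le (Nat.cast_le.mpr hab)
    have hunion : (⋃ n, S n) = Set.univ := by
      ext x
      simp only [Set.mem_iUnion, Set.mem_univ, iff_true, hSdef, Set.mem_setOf_eq]
      exact exists_nat_gt (f x)
    have htend : Tendsto (fun n => P (S n)) atTop (𝓝 (1 : ℝ≥0∞)) := by
      have h0 := tendsto_measure_iUnion_atTop (μ := P) hmono
      rw [hunion] at h0
      simpa [Function.comp_def] using h0
    have hlt1 : ENNReal.ofReal h < 1 := by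
      rw [← ENNReal.ofReal_one]
      exact (ENNReal.ofReal_lt_ofReal_iff one_pos).mpr hh1
    obtain ⟨n, hn⟩ := (htend.eventually (eventually_gt_nhds hlt1)).exists
    set r : ℝ := Real.sqrt n with hrdef
    have hr0 : 0 ≤ r := Real.sqrt_nonneg _
    have hr2 : r ^ 2 = (n : ℝ) := Real.sq_sqrt (Nat.cast_nonneg n)
    have main : ∀ (k' : ℕ) (c : Fin k' → EuclideanSpace ℝ (Fin d)) (j0 : Fin k'),
        c j0 ∈ C → ∀ s : ℝ, 0 < s → s ≤ h → trimRadius P φ s c ≤ r := by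
      intro k' c j0 hj0 s hs hsh
      set T : Set ℝ := {t : ℝ | 0 ≤ t ∧ P (bBall φ c t) ≤ ENNReal.ofReal s ∧
          ENNReal.ofReal s ≤ P (bBallc φ c t)} with hTdef
      have hTle : ∀ t ∈ T, t ≤ r := by
        intro t ht
        by_contra hcon
        push_neg at hcon
        have hsub : S n ⊆ bBall φ c t := by
          intro x hx
          have hx' : f x < (n : ℝ) := hx
          have h1 : bregCode φ x c ≤ breg φ x (c j0) :=
            ciInf_le (Set.Finite.bddBelow (Set.finite_range _)) j0
          have h2 : breg φ x (c j0) ≤ f x := hbound x (c j0) hj0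
          have h3 : r ^ 2 < t ^ 2 := by
            have := pow_lt_pow_left₀ hcon hr0 (n := 2) two_ne_zero
            exact this
          have : bregCode φ x c < t ^ 2 := by
            rw [← hr2] at hx'
            linarith
          exact this
        have hge : ENNReal.ofReal h < P (bBall φ c t) :=
          lt_of_lt_of_le hn (measure_mono hsub)
        have : ENNReal.ofReal h < ENNReal.ofReal s := lt_of_lt_of_le hge ht.2.1
        exact absurd this (not_lt.mpr (ENNReal.ofReal_le_ofReal hsh))
      rcases T.eq_empty_or_nonempty with hTe | ⟨t, ht⟩
      · have : trimRadius P φ s c = 0 := by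
          rw [trimRadius, ← hTdef, hTe, Real.sInf_empty]
        rw [this]; exact hr0
      · have hbdd : BddBelow T := ⟨0, fun x hx => hx.1⟩
        calc trimRadius P φ s c ≤ t := csInf_le hbdd ht
          _ ≤ r := hTle t ht
    refine ⟨r, ?_, ?_⟩
    · intro c0 hc0 s hs hsh
      exact main 1 (fun _ => c0) 0 hc0 s hs hsh
    · intro c j0 h1 h2 s hs hsh
      exact main k c j0 ⟨h1, by simpa [Metric.mem_closedBall, dist_zero_right] using h2⟩ s hs hsh


end
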